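/- Let f be a loopless (k,n)-bounded affine permutation and let f^∨ be its dual, defined by f^∨(p) := f^{-1}(p) + n. Let θ̃ : ℤ → ℝ satisfy θ̃_{p+n} = θ̃_p + π for all p ∈ ℤ. Then θ̃ is f-admissible if and only if the composition θ̃ ∘ f (which also satisfies (θ̃∘f)_{p+n} = (θ̃∘f)_p + π) is dual f^∨-admissible. -/
import Mathlib


/-- A `(k,n)`-bounded affine permutation, as a bijection `f : ℤ ≃ ℤ` with
`f(j+n) = f(j)+n`, `Σ_{j=1}^{n} (f(j)−j) = kn`, and `j ≤ f(j) ≤ j+n`. -/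
def IsBoundedAffinePermutation (k n : ℕ) (f : ℤ ≃ ℤ) : Prop :=
  (∀ j : ℤ, f (j + n) = f j + n) ∧
  (∑ j ∈ Finset.Icc (1 : ℤ) (n : ℤ), (f j - j)) = (k : ℤ) * n ∧
  ∀ j : ℤ, j ≤ f j ∧ f j ≤ j + n

/-- The dual bounded affine permutation `f^∨(p) := f⁻¹(p) + n`. -/
def dualBAP (n : ℕ) (f : ℤ ≃ ℤ) : ℤ ≃ ℤ := f.symm.trans (Equiv.addRight (n : ℤ))

/-- `(p,q)` forms an affine `f`-crossing: with `s = f⁻¹(p)` and `t = f⁻¹(q)`,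
one has `s < t < p < q ≤ s + n`. -/
def AffineCrossing (n : ℕ) (f : ℤ ≃ ℤ) (p q : ℤ) : Prop :=
  f.symm p < f.symm q ∧ f.symm q < p ∧ p < q ∧ q ≤ f.symm p + n

/-- `θ̃` is `f`-admissible: `θ̃_p < θ̃_q < θ̃_{p+n}` whenever `(p,q)` forms an
affine `f`-crossing. -/
def FAdmissible (n : ℕ) (f : ℤ ≃ ℤ) (θ : ℤ → ℝ) : Prop :=
  ∀ p q : ℤ, AffineCrossing n f p q → θ p < θ q ∧ θ q < θ (p + n)

/-- `(p,q)` forms a dual affine `g`-crossing: with `s = g⁻¹(p)` and `t = g⁻¹(q)`,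
one has `s < t ≤ p < q < s + n`. -/
def DualAffineCrossing (n : ℕ) (g : ℤ ≃ ℤ) (p q : ℤ) : Prop :=
  g.symm p < g.symm q ∧ g.symm q ≤ p ∧ p < q ∧ q < g.symm p + n

/-- `θ̃` is dual `g`-admissible: `θ̃_p < θ̃_q < θ̃_{p+n}` whenever `(p,q)` forms a
dual affine `g`-crossing. -/
def DualAdmissible (n : ℕ) (g : ℤ ≃ ℤ) (θ : ℤ → ℝ) : Prop :=
  ∀ p q : ℤ, DualAffineCrossing n g p q → θ p < θ q ∧ θ q < θ (p + n)

/-- Proposition 2.4(i): for a loopless bounded affine permutation `f` and a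
sequence `θ̃` with `θ̃_{p+n} = θ̃_p + π`, the sequence `θ̃` is `f`-admissible if
and only if `θ̃ ∘ f` is dual `f^∨`-admissible. -/
theorem admissible_iff_dual_admissible (k n : ℕ) (f : ℤ ≃ ℤ)
    (hf : IsBoundedAffinePermutation k n f)
    (hloopless : ∀ j : ℤ, j < f j)
    (θt : ℤ → ℝ) (hper : ∀ p : ℤ, θt (p + n) = θt p + Real.pi) :
    FAdmissible n f θt ↔ DualAdmissible n (dualBAP n f) (fun p => θt (f p)) := by
  have hshift : ∀ p : ℤ, f (p + n) = f p + n := hf.1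
  have hsymm : ∀ p : ℤ, (dualBAP n f).symm p = f p - n := by
    intro p
    have h1 : f (p - n) = f p - n := by
      have := hshift (p - n); simp at this; linarith
    simp [dualBAP, Equiv.symm_trans_apply, sub_eq_add_neg] at h1 ⊢
    linarith [h1]
  constructor
  · intro h p q hc
    obtain ⟨h1, h2, h3, h4⟩ := hc
    simp only [hsymm] at h1 h2 h4
    have := h (f p) (f q)
      ⟨by simpa using h3, by simp; linarith, by linarith, by simp; linarith⟩
    simpa [hshift] using this
  · intro h p q hc
    obtain ⟨h1, h2, h3, h4⟩ := hc
    have key := h (f.symm p) (f.symm q)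
      ⟨by simp only [hsymm]; simp; linarith,
       by simp only [hsymm]; simp; linarith,
       h1, by simp only [hsymm]; simp; linarith⟩
    simpa [hshift] using key
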